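/- Let d ≥ 3 and c > 0. Then for all r > 0, |d/dr [ r^{2−d} ∫₀^r s^{d−3} e^{−c(r²−s²)} ds ]| ≤ C c r/(1 + c r²), with C depending only on d. -/

import Mathlib

set_option maxHeartbeats 1000000


open MeasureTheory

/-- Derivative bound for the temperature kernel: for `d ≥ 3` there is `C > 0`
(depending only on `d`) such that for all `c > 0` and `r > 0`, the derivative of
`r ↦ r^{2-d} ∫₀^r s^{d-3} e^{-c(r²-s²)} ds` is bounded in absolute value by
`C c r/(1 + c r²)`. -/
theorem stmt11 (d : ℕ) (hd : 3 ≤ d) :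
    ∃ C > 0, ∀ c : ℝ, 0 < c → ∀ r : ℝ, 0 < r → ∀ y : ℝ,
      HasDerivAt (fun t : ℝ =>
        t ^ (2 - (d : ℤ)) * ∫ s in (0:ℝ)..t, s ^ (d - 3) * Real.exp (-c * (t ^ 2 - s ^ 2)))
        y r →
      |y| ≤ C * c * r / (1 + c * r ^ 2) := by
  obtain ⟨n, rfl⟩ := Nat.exists_eq_add_of_le hd
  refine ⟨4, by norm_num, ?_⟩
  intro c hc r hr y hy
  set H : ℝ → ℝ := fun u => ∫ s in (0:ℝ)..u, s ^ n * Real.exp (c * s ^ 2) with hHdef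
  -- rewrite the function
  have hfun : (fun t : ℝ => t ^ (2 - ((3 + n : ℕ) : ℤ)) *
      ∫ s in (0:ℝ)..t, s ^ (3 + n - 3) * Real.exp (-c * (t ^ 2 - s ^ 2)))
      = fun t : ℝ => (t ^ (n + 1))⁻¹ * (Real.exp (-c * t ^ 2) * H t) := by
    funext t
    have h1 : (2 - ((3 + n : ℕ) : ℤ)) = -((n + 1 : ℕ) : ℤ) := by push_cast; ring
    rw [h1, zpow_neg, zpow_natCast, hHdef]
    congr 1
    rw [← intervalIntegral.integral_const_mul]
    refine intervalIntegral.integral_congr fun s _ => ?_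
    rw [show 3 + n - 3 = n from by omega,
      show -c * (t ^ 2 - s ^ 2) = -c * t ^ 2 + c * s ^ 2 from by ring, Real.exp_add]
    ring
  rw [hfun] at hy
  -- derivative pieces
  have hcont : Continuous fun s : ℝ => s ^ n * Real.exp (c * s ^ 2) := by fun_prop
  have hH : HasDerivAt H (r ^ n * Real.exp (c * r ^ 2)) r :=
    intervalIntegral.integral_hasDerivAt_right (hcont.intervalIntegrable _ _)
      (hcont.stronglyMeasurableAtFilter _ _) hcont.continuousAt
  have hE : HasDerivAt (fun t : ℝ => Real.exp (-c * t ^ 2))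
      (Real.exp (-c * r ^ 2) * (-c * (2 * r ^ 1))) r := by
    have := ((hasDerivAt_pow 2 r).const_mul (-c)).exp
    simpa using this
  have hP : HasDerivAt (fun t : ℝ => (t ^ (n + 1))⁻¹)
      (-(((n : ℝ) + 1) * r ^ n) / (r ^ (n + 1)) ^ 2) r := by
    have h := (hasDerivAt_pow (n + 1) r).inv (pow_ne_zero _ hr.ne')
    simp at h
    exact h
  have total := hP.mul (hE.mul hH)
  have hyval := hy.unique total
  -- the integral G
  set G : ℝ := ∫ s in (0:ℝ)..r, s ^ n * Real.exp (-c * (r ^ 2 - s ^ 2)) with hGdef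
  have hGi : Real.exp (-c * r ^ 2) * H r = G := by
    rw [hGdef, hHdef, ← intervalIntegral.integral_const_mul]
    refine intervalIntegral.integral_congr fun s _ => ?_
    rw [show -c * (r ^ 2 - s ^ 2) = -c * r ^ 2 + c * s ^ 2 from by ring, Real.exp_add]
    ring
  have hHr : H r = G * Real.exp (c * r ^ 2) := by
    rw [← hGi]
    rw [mul_comm (Real.exp (-c * r ^ 2)) (H r), mul_assoc, ← Real.exp_add]
    simp
  have hv : Real.exp (c * r ^ 2) = (Real.exp (-c * r ^ 2))⁻¹ := by
    rw [← Real.exp_neg]; ring_nf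
  -- key algebraic identity
  have hyW : y * (r ^ (n + 1) * r) = (r ^ (n + 1) - ((n : ℝ) + 1) * G) - 2 * c * r ^ 2 * G := by
    rw [hyval, Pi.mul_apply, hHr, hv]
    field_simp
    ring
  -- integral bounds
  have hi1 : IntervalIntegrable (fun s : ℝ => s ^ n) volume 0 r :=
    (continuous_pow n).intervalIntegrable _ _
  have hcont2 : Continuous fun s : ℝ => s ^ n * Real.exp (-c * (r ^ 2 - s ^ 2)) := by fun_prop
  have hi2 : IntervalIntegrable (fun s : ℝ => s ^ n * Real.exp (-c * (r ^ 2 - s ^ 2)))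
      volume 0 r := hcont2.intervalIntegrable _ _
  set I : ℝ := ∫ s in (0:ℝ)..r, s ^ n with hIdef
  have hQI : ((n : ℝ) + 1) * I = r ^ (n + 1) := by
    rw [hIdef, integral_pow, zero_pow (Nat.succ_ne_zero n), sub_zero]
    have : ((n : ℝ) + 1) ≠ 0 := by positivity
    field_simp
  have hG0 : 0 ≤ G := by
    rw [hGdef]
    exact intervalIntegral.integral_nonneg hr.le fun s hs =>
      mul_nonneg (pow_nonneg hs.1 n) (Real.exp_pos _).le
  have hGI : G ≤ I := by
    rw [hGdef, hIdef]
    refine intervalIntegral.integral_mono_on hr.le hi2 hi1 fun s hs => ?_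
    have h1 : Real.exp (-c * (r ^ 2 - s ^ 2)) ≤ 1 := by
      rw [Real.exp_le_one_iff]
      nlinarith [mul_nonneg (mul_nonneg hc.le (sub_nonneg.2 hs.2))
        (by linarith [hs.1] : (0:ℝ) ≤ r + s)]
    exact mul_le_of_le_one_right (pow_nonneg hs.1 n) h1
  have hIG : I - G ≤ c * r ^ 2 * I := by
    have hsub : I - G = ∫ s in (0:ℝ)..r,
        (s ^ n - s ^ n * Real.exp (-c * (r ^ 2 - s ^ 2))) := by
      rw [hIdef, hGdef, intervalIntegral.integral_sub hi1 hi2]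
    have hmono : (∫ s in (0:ℝ)..r, (s ^ n - s ^ n * Real.exp (-c * (r ^ 2 - s ^ 2))))
        ≤ ∫ s in (0:ℝ)..r, c * r ^ 2 * s ^ n := by
      refine intervalIntegral.integral_mono_on hr.le (hi1.sub hi2) (hi1.const_mul _)
        fun s hs => ?_
      have he := Real.add_one_le_exp (-c * (r ^ 2 - s ^ 2))
      have h1 := mul_le_mul_of_nonneg_left he (pow_nonneg hs.1 n)
      nlinarith [mul_nonneg (mul_nonneg hc.le (sq_nonneg s)) (pow_nonneg hs.1 n)]
    have hcm : (∫ s in (0:ℝ)..r, c * r ^ 2 * s ^ n) = c * r ^ 2 * I := by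
      rw [hIdef, intervalIntegral.integral_const_mul]
    linarith [hsub ▸ hmono, hcm ▸ le_refl (c * r ^ 2 * I)]
  have hnpos : (0:ℝ) < (n : ℝ) + 1 := by positivity
  have hGI' : ((n : ℝ) + 1) * G ≤ r ^ (n + 1) := by
    calc ((n : ℝ) + 1) * G ≤ ((n : ℝ) + 1) * I := by
          exact mul_le_mul_of_nonneg_left hGI hnpos.le
      _ = r ^ (n + 1) := hQI
  have hkey : r ^ (n + 1) - ((n : ℝ) + 1) * G ≤ c * r ^ 2 * r ^ (n + 1) := by
    calc r ^ (n + 1) - ((n : ℝ) + 1) * G = ((n : ℝ) + 1) * (I - G) := by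
          rw [← hQI]; ring
      _ ≤ ((n : ℝ) + 1) * (c * r ^ 2 * I) := mul_le_mul_of_nonneg_left hIG hnpos.le
      _ = c * r ^ 2 * r ^ (n + 1) := by rw [← hQI]; ring
  have hGQ : G ≤ r ^ (n + 1) := by nlinarith [hG0, hGI']
  -- exponential decay bound
  have hG3 : c * r ^ 2 * G ≤ r ^ (n + 1) := by
    have hJc : Continuous fun s : ℝ => Real.exp (c * r * s) := by fun_prop
    have hder : ∀ s ∈ Set.uIcc (0:ℝ) r,
        HasDerivAt (fun u : ℝ => Real.exp (c * r * u) / (c * r)) (Real.exp (c * r * s)) s := by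
      intro s _
      have h := (((hasDerivAt_id s).const_mul (c * r)).exp).div_const (c * r)
      have hcr : c * r ≠ 0 := by positivity
      exact h.congr_deriv (by simp only [id_eq, mul_one]; exact mul_div_cancel_right₀ _ hcr)
    have hJ := intervalIntegral.integral_eq_sub_of_hasDerivAt hder
      (hJc.intervalIntegrable _ _)
    have hi3 : IntervalIntegrable
        (fun s : ℝ => r ^ n * Real.exp (-c * r ^ 2) * Real.exp (c * r * s)) volume 0 r := by
      exact (by fun_prop : Continuous fun s : ℝ =>
        r ^ n * Real.exp (-c * r ^ 2) * Real.exp (c * r * s)).intervalIntegrable _ _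
    have hGle : G ≤ ∫ s in (0:ℝ)..r, r ^ n * Real.exp (-c * r ^ 2) * Real.exp (c * r * s) := by
      rw [hGdef]
      refine intervalIntegral.integral_mono_on hr.le hi2 hi3 fun s hs => ?_
      have h1 : s ^ n ≤ r ^ n := pow_le_pow_left₀ hs.1 hs.2 n
      have h2 : Real.exp (-c * (r ^ 2 - s ^ 2)) ≤ Real.exp (-c * r ^ 2 + c * r * s) := by
        rw [Real.exp_le_exp]
        nlinarith [mul_nonneg (mul_nonneg hc.le hs.1) (sub_nonneg.2 hs.2)]
      calc s ^ n * Real.exp (-c * (r ^ 2 - s ^ 2))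
          ≤ r ^ n * Real.exp (-c * r ^ 2 + c * r * s) :=
            mul_le_mul h1 h2 (Real.exp_pos _).le (pow_nonneg hr.le n)
        _ = r ^ n * Real.exp (-c * r ^ 2) * Real.exp (c * r * s) := by
            rw [Real.exp_add]; ring
    have hInt : (∫ s in (0:ℝ)..r, r ^ n * Real.exp (-c * r ^ 2) * Real.exp (c * r * s))
        = r ^ n * Real.exp (-c * r ^ 2) * (Real.exp (c * r * r) / (c * r) - 1 / (c * r)) := by
      rw [intervalIntegral.integral_const_mul, hJ, mul_zero, Real.exp_zero]
    have hcr2 : c * r * r = c * r ^ 2 := by ring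
    have hval : c * r ^ 2 * (r ^ n * Real.exp (-c * r ^ 2) *
        (Real.exp (c * r * r) / (c * r) - 1 / (c * r)))
        = r ^ (n + 1) * (1 - Real.exp (-c * r ^ 2)) := by
      rw [hcr2, hv]
      have h1 : Real.exp (-c * r ^ 2) ≠ 0 := Real.exp_ne_zero _
      field_simp
      ring
    have hEpos : 0 < Real.exp (-c * r ^ 2) := Real.exp_pos _
    have hQpos : (0:ℝ) < r ^ (n + 1) := pow_pos hr _
    calc c * r ^ 2 * G
        ≤ c * r ^ 2 * (r ^ n * Real.exp (-c * r ^ 2) *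
            (Real.exp (c * r * r) / (c * r) - 1 / (c * r))) := by
          rw [← hInt]; exact mul_le_mul_of_nonneg_left hGle (by positivity)
      _ = r ^ (n + 1) * (1 - Real.exp (-c * r ^ 2)) := hval
      _ ≤ r ^ (n + 1) := by nlinarith [mul_nonneg hQpos.le hEpos.le]
  -- final estimate
  have hQpos : (0:ℝ) < r ^ (n + 1) := pow_pos hr _
  have hW1 : |y * (r ^ (n + 1) * r)| ≤ 2 * (c * r ^ 2 * r ^ (n + 1)) := by
    rw [hyW]
    refine abs_le.2 ⟨?_, ?_⟩
    · nlinarith [mul_le_mul_of_nonneg_left hGQ (by positivity : (0:ℝ) ≤ 2 * c * r ^ 2), hGI']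
    · nlinarith [mul_nonneg (mul_nonneg (mul_nonneg (by norm_num : (0:ℝ) ≤ 2) hc.le)
        (sq_nonneg r)) hG0, hkey, mul_pos (mul_pos hc (pow_pos hr 2)) hQpos]
  have hW2 : |y * (r ^ (n + 1) * r)| ≤ 2 * r ^ (n + 1) := by
    rw [hyW]
    refine abs_le.2 ⟨?_, ?_⟩
    · nlinarith [hG3, hGI', hQpos]
    · nlinarith [hG0, hGI', hnpos, hQpos, mul_nonneg (mul_nonneg (mul_nonneg
        (by norm_num : (0:ℝ) ≤ 2) hc.le) (sq_nonneg r)) hG0]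
  have habs : |y| * (r ^ (n + 1) * r) = |y * (r ^ (n + 1) * r)| := by
    rw [abs_mul, abs_of_pos (by positivity : (0:ℝ) < r ^ (n + 1) * r)]
  have hy1 : |y| ≤ 2 * c * r := by
    refine le_of_mul_le_mul_right ?_ (show (0:ℝ) < r ^ (n + 1) * r by positivity)
    calc |y| * (r ^ (n + 1) * r) = |y * (r ^ (n + 1) * r)| := habs
      _ ≤ 2 * (c * r ^ 2 * r ^ (n + 1)) := hW1
      _ = 2 * c * r * (r ^ (n + 1) * r) := by ring
  have hyr : |y| * r ≤ 2 := by
    refine le_of_mul_le_mul_right ?_ hQpos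
    calc |y| * r * r ^ (n + 1) = |y| * (r ^ (n + 1) * r) := by ring
      _ = |y * (r ^ (n + 1) * r)| := habs
      _ ≤ 2 * r ^ (n + 1) := hW2
  rw [le_div_iff₀ (by positivity : (0:ℝ) < 1 + c * r ^ 2)]
  rcases le_total (c * r ^ 2) 1 with hcr | hcr
  · nlinarith [abs_nonneg y, hy1, hc.le, hr.le, mul_nonneg hc.le (sq_nonneg r)]
  · nlinarith [mul_le_mul_of_nonneg_right hyr (mul_nonneg hc.le hr.le),
      mul_le_mul_of_nonneg_left hcr (abs_nonneg y), abs_nonneg y]
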